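/- Let 0 < a < 1, x > 0, y > 0 with max{y, x, ay/x} < 1, and define the weights α(0,0) := x, α(i,0) := 1 (i ≥ 1), α(0,j) := a (j ≥ 1), α(i,j) := 1 (i,j ≥ 1), β(0,0) := y, β(i,0) := ay/x (i ≥ 1), β(i,j) := 1 (j ≥ 1). Then the following two conditions hold simultaneously — (a) the six-point-test matrix M(k) is positive semidefinite for every k ∈ ℤ₊², and (b) there is NO Borel probability measure μ on [0,1]² with ∬ s^{k₁} dμ = x² (k₁ ≥ 1), ∬ t^{k₂} dμ = y² (k₂ ≥ 1), ∬ s^{k₁}t^{k₂} dμ = a²y² (k₁, k₂ ≥ 1) — if and only if x > a and √( (1−x²)/(1−a²) ) < y ≤ x √( (1−x²)/(x² + a⁴ − 2a²x²) ). -/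

import Mathlib

open MeasureTheory Filter

/-- The 2×2 matrix of the Six-point Test at base point `k` for a 2-variable
weighted shift with weight families `α`, `β`. -/
def sixPointMatrix (α β : ℕ × ℕ → ℝ) (k : ℕ × ℕ) : Matrix (Fin 2) (Fin 2) ℝ :=
  !![α (k.1 + 1, k.2) ^ 2 - α k ^ 2,
     α (k.1, k.2 + 1) * β (k.1 + 1, k.2) - α k * β k;
     α (k.1, k.2 + 1) * β (k.1 + 1, k.2) - α k * β k,
     β (k.1, k.2 + 1) ^ 2 - β k ^ 2]

lemma psd2 (A B C : ℝ) :
    (!![A, B; B, C]).PosSemidef ↔ 0 ≤ A ∧ 0 ≤ C ∧ B ^ 2 ≤ A * C := by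
  rw [Matrix.posSemidef_iff_dotProduct_mulVec]
  constructor
  · rintro ⟨-, h⟩
    have hA : 0 ≤ A := by
      have := h ![1, 0]
      simpa [dotProduct, Matrix.mulVec, Fin.sum_univ_two] using this
    have hC : 0 ≤ C := by
      have := h ![0, 1]
      simpa [dotProduct, Matrix.mulVec, Fin.sum_univ_two] using this
    refine ⟨hA, hC, ?_⟩
    have hq : ∀ t : ℝ, 0 ≤ A * (t * t) + (2 * B) * t + C := by
      intro t
      have := h ![t, 1]
      simp [dotProduct, Matrix.mulVec, Fin.sum_univ_two] at this
      nlinarith [this]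
    have := discrim_le_zero hq
    simp [discrim] at this
    nlinarith [this]
  · rintro ⟨hA, hC, hB⟩
    constructor
    · unfold Matrix.IsHermitian
      ext i j
      fin_cases i <;> fin_cases j <;>
        simp [Matrix.conjTranspose, Matrix.vecHead, Matrix.vecTail]
    · intro v
      have hv := sq_nonneg (A * v 0 + B * v 1)
      have h2 : 0 ≤ (A * C - B ^ 2) * (v 1) ^ 2 :=
        mul_nonneg (by linarith) (sq_nonneg _)
      simp [dotProduct, Matrix.mulVec, Fin.sum_univ_two]
      rcases eq_or_lt_of_le hA with hA0 | hA0
      · have hB0 : B = 0 := by nlinarith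
        subst hB0
        rw [← hA0]
        nlinarith [sq_nonneg (v 1)]
      · nlinarith

lemma integrable_dirac'' {f : ℝ × ℝ → ℝ} (hf : StronglyMeasurable f) (p : ℝ × ℝ) :
    Integrable f (Measure.dirac p) := by
  refine ⟨hf.aestronglyMeasurable, ?_⟩
  simp [HasFiniteIntegral, lintegral_dirac]

lemma integral_smul_dirac (f : ℝ × ℝ → ℝ) (c : ℝ) (hc : 0 ≤ c) (p : ℝ × ℝ) :
    ∫ q, f q ∂(ENNReal.ofReal c • Measure.dirac p) = c * f p := by
  rw [integral_smul_measure, integral_dirac, ENNReal.toReal_ofReal hc, smul_eq_mul]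

lemma integral_fourAtoms (c₀ c₁ c₂ c₃ : ℝ) (h₀ : 0 ≤ c₀) (h₁ : 0 ≤ c₁) (h₂ : 0 ≤ c₂)
    (h₃ : 0 ≤ c₃) (p₀ p₁ p₂ p₃ : ℝ × ℝ) (f : ℝ × ℝ → ℝ) (hf : StronglyMeasurable f) :
    ∫ q, f q ∂(ENNReal.ofReal c₀ • Measure.dirac p₀ + ENNReal.ofReal c₁ • Measure.dirac p₁ +
        ENNReal.ofReal c₂ • Measure.dirac p₂ + ENNReal.ofReal c₃ • Measure.dirac p₃) =
      c₀ * f p₀ + c₁ * f p₁ + c₂ * f p₂ + c₃ * f p₃ := by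
  have I : ∀ (c : ℝ) (p : ℝ × ℝ), Integrable f (ENNReal.ofReal c • Measure.dirac p) :=
    fun c p => (integrable_dirac'' hf p).smul_measure ENNReal.ofReal_ne_top
  rw [integral_add_measure (((I _ _).add_measure (I _ _)).add_measure (I _ _)) (I _ _),
      integral_add_measure ((I _ _).add_measure (I _ _)) (I _ _),
      integral_add_measure (I _ _) (I _ _),
      integral_smul_dirac f _ h₀, integral_smul_dirac f _ h₁,
      integral_smul_dirac f _ h₂, integral_smul_dirac f _ h₃]

lemma moment_limit {μ : Measure (ℝ × ℝ)} [IsProbabilityMeasure μ] {g : ℝ × ℝ → ℝ}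
    (hg : Measurable g) (hae : ∀ᵐ p ∂μ, 0 ≤ g p ∧ g p ≤ 1) {c : ℝ}
    (hmom : ∀ k : ℕ, 1 ≤ k → ∫ p, g p ^ k ∂μ = c) :
    (μ {p | g p = 1}).toReal = c := by
  have hmeas : MeasurableSet {p : ℝ × ℝ | g p = 1} := hg (measurableSet_singleton 1)
  have hlim : Tendsto (fun k : ℕ => ∫ p, g p ^ (k + 1) ∂μ) atTop
      (nhds (∫ p, Set.indicator {p : ℝ × ℝ | g p = 1} (fun _ => (1 : ℝ)) p ∂μ)) := by
    apply tendsto_integral_of_dominated_convergence (fun _ => (1 : ℝ))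
    · intro n; exact (hg.pow_const (n + 1)).aestronglyMeasurable
    · exact integrable_const 1
    · intro n
      filter_upwards [hae] with p hp
      rw [Real.norm_eq_abs, abs_of_nonneg (pow_nonneg hp.1 _)]
      exact pow_le_one₀ hp.1 hp.2
    · filter_upwards [hae] with p hp
      by_cases h1 : g p = 1
      · have hmem : p ∈ {p : ℝ × ℝ | g p = 1} := h1
        rw [Set.indicator_of_mem hmem]
        simp [h1]
      · have hnmem : p ∉ {p : ℝ × ℝ | g p = 1} := h1
        rw [Set.indicator_of_notMem hnmem]
        have h0 : Tendsto (fun k : ℕ => g p ^ k) atTop (nhds 0) :=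
          tendsto_pow_atTop_nhds_zero_of_lt_one hp.1 (lt_of_le_of_ne hp.2 h1)
        exact h0.comp (tendsto_add_atTop_nat 1)
  have hconst : Tendsto (fun k : ℕ => ∫ p, g p ^ (k + 1) ∂μ) atTop (nhds c) := by
    have he : (fun k : ℕ => ∫ p, g p ^ (k + 1) ∂μ) = fun _ => c :=
      funext fun k => hmom (k + 1) (by omega)
    rw [he]; exact tendsto_const_nhds
  have := tendsto_nhds_unique hlim hconst
  rwa [integral_indicator_const (1 : ℝ) hmeas, smul_eq_mul, mul_one] at this

lemma exists_measure (a x y : ℝ) (ha₀ : 0 < a) (ha₁ : a < 1) (hx : 0 < x) (hy : 0 < y)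
    (hx₁ : x < 1) (hy₁ : y < 1) (hayx : a * y < x)
    (hsub : y ^ 2 * (1 - a ^ 2) ≤ 1 - x ^ 2) :
    ∃ μ : Measure (ℝ × ℝ), IsProbabilityMeasure μ ∧
      μ (Set.Icc (0 : ℝ) 1 ×ˢ Set.Icc (0 : ℝ) 1)ᶜ = 0 ∧
      (∀ k₁ : ℕ, 1 ≤ k₁ → ∫ p, p.1 ^ k₁ ∂μ = x ^ 2) ∧
      (∀ k₂ : ℕ, 1 ≤ k₂ → ∫ p, p.2 ^ k₂ ∂μ = y ^ 2) ∧
      (∀ k₁ k₂ : ℕ, 1 ≤ k₁ → 1 ≤ k₂ →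
        ∫ p, p.1 ^ k₁ * p.2 ^ k₂ ∂μ = a ^ 2 * y ^ 2) := by
  set c₀ : ℝ := 1 - x ^ 2 - y ^ 2 * (1 - a ^ 2) with hc₀def
  set c₁ : ℝ := x ^ 2 - a ^ 2 * y ^ 2 with hc₁def
  set c₂ : ℝ := y ^ 2 * (1 - a ^ 2) with hc₂def
  set c₃ : ℝ := a ^ 2 * y ^ 2 with hc₃def
  have h₀ : 0 ≤ c₀ := by simp only [hc₀def]; linarith
  have h₁ : 0 ≤ c₁ := by simp only [hc₁def]; nlinarith [mul_pos ha₀ hy]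
  have ha2 : 0 < 1 - a ^ 2 := by nlinarith
  have h₂ : 0 ≤ c₂ := by simp only [hc₂def]; exact mul_nonneg (sq_nonneg y) ha2.le
  have h₃ : 0 ≤ c₃ := by positivity
  refine ⟨ENNReal.ofReal c₀ • Measure.dirac ((0 : ℝ), (0 : ℝ)) +
      ENNReal.ofReal c₁ • Measure.dirac ((1 : ℝ), (0 : ℝ)) +
      ENNReal.ofReal c₂ • Measure.dirac ((0 : ℝ), (1 : ℝ)) +
      ENNReal.ofReal c₃ • Measure.dirac ((1 : ℝ), (1 : ℝ)), ?_, ?_, ?_, ?_, ?_⟩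
  · constructor
    simp only [Measure.add_apply, Measure.smul_apply, smul_eq_mul,
      Measure.dirac_apply_of_mem (Set.mem_univ _), mul_one]
    rw [← ENNReal.ofReal_add h₀ h₁, ← ENNReal.ofReal_add (by linarith) h₂,
      ← ENNReal.ofReal_add (by linarith) h₃]
    rw [show c₀ + c₁ + c₂ + c₃ = 1 by simp only [hc₀def, hc₁def, hc₂def, hc₃def]; ring]
    exact ENNReal.ofReal_one
  · have hS : MeasurableSet ((Set.Icc (0 : ℝ) 1 ×ˢ Set.Icc (0 : ℝ) 1)ᶜ) :=
      (measurableSet_Icc.prod measurableSet_Icc).compl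
    have hd : ∀ p : ℝ × ℝ, p ∈ Set.Icc (0 : ℝ) 1 ×ˢ Set.Icc (0 : ℝ) 1 →
        Measure.dirac p ((Set.Icc (0 : ℝ) 1 ×ˢ Set.Icc (0 : ℝ) 1)ᶜ) = 0 := by
      intro p hp
      rw [Measure.dirac_apply' _ hS, Set.indicator_of_notMem (by simpa using hp)]
    simp only [Measure.add_apply, Measure.smul_apply, smul_eq_mul]
    have hm : ∀ u v : ℝ, u ∈ Set.Icc (0:ℝ) 1 → v ∈ Set.Icc (0:ℝ) 1 →
        (u, v) ∈ Set.Icc (0 : ℝ) 1 ×ˢ Set.Icc (0 : ℝ) 1 := fun u v hu hv => Set.mem_prod.mpr ⟨hu, hv⟩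
    rw [hd _ (hm 0 0 (by norm_num) (by norm_num)), hd _ (hm 1 0 (by norm_num) (by norm_num)),
      hd _ (hm 0 1 (by norm_num) (by norm_num)), hd _ (hm 1 1 (by norm_num) (by norm_num))]
    simp
  · intro k₁ hk₁
    rw [integral_fourAtoms c₀ c₁ c₂ c₃ h₀ h₁ h₂ h₃ _ _ _ _ (fun p => p.1 ^ k₁)
      (continuous_fst.pow k₁).stronglyMeasurable]
    simp only [hc₁def, hc₃def]
    simp [zero_pow (by omega : k₁ ≠ 0)]
  · intro k₂ hk₂
    rw [integral_fourAtoms c₀ c₁ c₂ c₃ h₀ h₁ h₂ h₃ _ _ _ _ (fun p => p.2 ^ k₂)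
      (continuous_snd.pow k₂).stronglyMeasurable]
    simp only [hc₂def, hc₃def]
    simp [zero_pow (by omega : k₂ ≠ 0)]
    ring
  · intro k₁ k₂ hk₁ hk₂
    rw [integral_fourAtoms c₀ c₁ c₂ c₃ h₀ h₁ h₂ h₃ _ _ _ _ (fun p => p.1 ^ k₁ * p.2 ^ k₂)
      ((continuous_fst.pow k₁).mul (continuous_snd.pow k₂)).stronglyMeasurable]
    simp only [hc₃def]
    simp [zero_pow (by omega : k₁ ≠ 0), zero_pow (by omega : k₂ ≠ 0)]

lemma no_measure (a x y : ℝ) (hcond : 1 - x ^ 2 < y ^ 2 * (1 - a ^ 2)) :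
    ¬ ∃ μ : Measure (ℝ × ℝ), IsProbabilityMeasure μ ∧
      μ (Set.Icc (0 : ℝ) 1 ×ˢ Set.Icc (0 : ℝ) 1)ᶜ = 0 ∧
      (∀ k₁ : ℕ, 1 ≤ k₁ → ∫ p, p.1 ^ k₁ ∂μ = x ^ 2) ∧
      (∀ k₂ : ℕ, 1 ≤ k₂ → ∫ p, p.2 ^ k₂ ∂μ = y ^ 2) ∧
      (∀ k₁ k₂ : ℕ, 1 ≤ k₁ → 1 ≤ k₂ →
        ∫ p, p.1 ^ k₁ * p.2 ^ k₂ ∂μ = a ^ 2 * y ^ 2) := by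
  rintro ⟨μ, hprob, hnull, h1, h2, h3⟩
  have haeS : ∀ᵐ p ∂μ, p ∈ Set.Icc (0 : ℝ) 1 ×ˢ Set.Icc (0 : ℝ) 1 := by
    rw [ae_iff]
    exact hnull
  have haeS' : ∀ᵐ p : ℝ × ℝ ∂μ, (0 ≤ p.1 ∧ p.1 ≤ 1) ∧ (0 ≤ p.2 ∧ p.2 ≤ 1) := by
    filter_upwards [haeS] with p hp
    rw [Set.mem_prod, Set.mem_Icc, Set.mem_Icc] at hp
    exact hp
  have mA : (μ {p : ℝ × ℝ | p.1 = 1}).toReal = x ^ 2 := by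
    refine moment_limit measurable_fst ?_ h1
    filter_upwards [haeS'] with p hp using hp.1
  have mB : (μ {p : ℝ × ℝ | p.2 = 1}).toReal = y ^ 2 := by
    refine moment_limit measurable_snd ?_ h2
    filter_upwards [haeS'] with p hp using hp.2
  have mC : (μ {p : ℝ × ℝ | p.1 * p.2 = 1}).toReal = a ^ 2 * y ^ 2 := by
    refine moment_limit (measurable_fst.mul measurable_snd) ?_ ?_
    · filter_upwards [haeS'] with p hp
      exact ⟨mul_nonneg hp.1.1 hp.2.1, mul_le_one₀ hp.1.2 hp.2.1 hp.2.2⟩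
    · intro k hk
      simp only [Pi.mul_apply, mul_pow]
      exact h3 k k hk hk
  have hCeq : μ {p : ℝ × ℝ | p.1 * p.2 = 1} =
      μ ({p : ℝ × ℝ | p.1 = 1} ∩ {p : ℝ × ℝ | p.2 = 1}) := by
    apply measure_congr
    rw [eventuallyEq_set]
    filter_upwards [haeS'] with p hp
    simp only [Set.mem_setOf_eq, Set.mem_inter_iff]
    constructor
    · intro h
      obtain ⟨⟨h0x, h1x⟩, h0y, h1y⟩ := hp
      constructor <;> nlinarith
    · rintro ⟨e1, e2⟩
      rw [e1, e2, mul_one]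
  have hmB : MeasurableSet {p : ℝ × ℝ | p.2 = 1} := measurable_snd (measurableSet_singleton 1)
  have key := measure_union_add_inter (μ := μ) {p : ℝ × ℝ | p.1 = 1} hmB
  have hne : ∀ s : Set (ℝ × ℝ), μ s ≠ ⊤ := fun s => measure_ne_top μ s
  have keyR : (μ ({p : ℝ × ℝ | p.1 = 1} ∪ {p : ℝ × ℝ | p.2 = 1})).toReal +
      (μ ({p : ℝ × ℝ | p.1 = 1} ∩ {p : ℝ × ℝ | p.2 = 1})).toReal =
      (μ {p : ℝ × ℝ | p.1 = 1}).toReal + (μ {p : ℝ × ℝ | p.2 = 1}).toReal := by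
    rw [← ENNReal.toReal_add (hne _) (hne _), ← ENNReal.toReal_add (hne _) (hne _), key]
  have hle1 : (μ ({p : ℝ × ℝ | p.1 = 1} ∪ {p : ℝ × ℝ | p.2 = 1})).toReal ≤ 1 := by
    simpa using ENNReal.toReal_mono ENNReal.one_ne_top (prob_le_one (μ := μ))
  rw [← hCeq] at keyR
  rw [mA, mB, mC] at keyR
  linarith

lemma hyp_iff (a x y : ℝ) (ha₀ : 0 < a) (ha₁ : a < 1) (hx : 0 < x) (hy : 0 < y)
    (hx₁ : x < 1) (hy₁ : y < 1) (hayx : a * y < x)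
    (α β : ℕ × ℕ → ℝ)
    (hα : ∀ i j : ℕ, α (i, j) = if i = 0 then (if j = 0 then x else a) else 1)
    (hβ : ∀ i j : ℕ, β (i, j) = if j = 0 then (if i = 0 then y else a * y / x) else 1) :
    (∀ k : ℕ × ℕ, (sixPointMatrix α β k).PosSemidef) ↔
      y ^ 2 * (x ^ 2 + a ^ 4 - 2 * a ^ 2 * x ^ 2) ≤ x ^ 2 * (1 - x ^ 2) := by
  have hxne : x ≠ 0 := ne_of_gt hx
  have hkey : (a * (a * y / x) - x * y) * x = a ^ 2 * y - x ^ 2 * y := by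
    field_simp
  have e00 : sixPointMatrix α β (0, 0) =
      !![1 - x ^ 2, a * (a * y / x) - x * y; a * (a * y / x) - x * y, 1 - y ^ 2] := by
    ext i j
    fin_cases i <;> fin_cases j <;> simp [sixPointMatrix, hα, hβ]
  constructor
  · intro h
    have h0 := h (0, 0)
    rw [e00, psd2] at h0
    obtain ⟨hA, hC, hB⟩ := h0
    have h2 : (a * (a * y / x) - x * y) ^ 2 * x ^ 2 = (a ^ 2 * y - x ^ 2 * y) ^ 2 := by
      rw [← hkey]; ring
    nlinarith [hB, h2, mul_pos hx hx, sq_nonneg (a * (a * y / x) - x * y)]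
  · intro hk
    rintro ⟨i, j⟩
    have hayx1 : a * y / x < 1 := (div_lt_one hx).2 hayx
    have hayx0 : 0 < a * y / x := by positivity
    rcases i with _ | i <;> rcases j with _ | j
    · rw [e00, psd2]
      refine ⟨by nlinarith, by nlinarith, ?_⟩
      have h2 : (a * (a * y / x) - x * y) ^ 2 * x ^ 2 = (a ^ 2 * y - x ^ 2 * y) ^ 2 := by
        rw [← hkey]; ring
      nlinarith [hk, h2, mul_pos hx hx]
    · have e : sixPointMatrix α β (0, j + 1) = !![1 - a ^ 2, 0; 0, 0] := by
        ext i' j'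
        fin_cases i' <;> fin_cases j' <;> simp [sixPointMatrix, hα, hβ]
      rw [e, psd2]
      refine ⟨by nlinarith, le_refl 0, by norm_num⟩
    · have e : sixPointMatrix α β (i + 1, 0) = !![0, 0; 0, 1 - (a * y / x) ^ 2] := by
        ext i' j'
        fin_cases i' <;> fin_cases j' <;> simp [sixPointMatrix, hα, hβ] <;> ring
      rw [e, psd2]
      refine ⟨le_refl 0, by nlinarith, by norm_num⟩
    · have e : sixPointMatrix α β (i + 1, j + 1) = !![0, 0; 0, 0] := by
        ext i' j'
        fin_cases i' <;> fin_cases j' <;> simp [sixPointMatrix, hα, hβ]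
      rw [e, psd2]
      norm_num

/-- The second family of 2-variable weighted shifts (Figure 3) is jointly
hyponormal and not subnormal exactly when `x > a` and
`√((1−x²)/(1−a²)) < y ≤ x√((1−x²)/(x²+a⁴−2a²x²))`. -/
theorem stmt13 (a x y : ℝ) (ha₀ : 0 < a) (ha₁ : a < 1) (hx : 0 < x) (hy : 0 < y)
    (hx₁ : x < 1) (hy₁ : y < 1) (hayx : a * y / x < 1)
    (α β : ℕ × ℕ → ℝ)
    (hα : ∀ i j : ℕ, α (i, j) = if i = 0 then (if j = 0 then x else a) else 1)
    (hβ : ∀ i j : ℕ, β (i, j) = if j = 0 then (if i = 0 then y else a * y / x) else 1) :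
    ((∀ k : ℕ × ℕ, (sixPointMatrix α β k).PosSemidef) ∧
      ¬ ∃ μ : Measure (ℝ × ℝ), IsProbabilityMeasure μ ∧
        μ (Set.Icc (0 : ℝ) 1 ×ˢ Set.Icc (0 : ℝ) 1)ᶜ = 0 ∧
        (∀ k₁ : ℕ, 1 ≤ k₁ → ∫ p, p.1 ^ k₁ ∂μ = x ^ 2) ∧
        (∀ k₂ : ℕ, 1 ≤ k₂ → ∫ p, p.2 ^ k₂ ∂μ = y ^ 2) ∧
        (∀ k₁ k₂ : ℕ, 1 ≤ k₁ → 1 ≤ k₂ →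
          ∫ p, p.1 ^ k₁ * p.2 ^ k₂ ∂μ = a ^ 2 * y ^ 2)) ↔
      (a < x ∧ Real.sqrt ((1 - x ^ 2) / (1 - a ^ 2)) < y ∧
        y ≤ x * Real.sqrt ((1 - x ^ 2) / (x ^ 2 + a ^ 4 - 2 * a ^ 2 * x ^ 2))) := by
  have hayx' : a * y < x := by
    have := (div_lt_one hx).1 hayx
    linarith
  have ha2 : 0 < 1 - a ^ 2 := by nlinarith
  have hx2 : 0 < 1 - x ^ 2 := by nlinarith
  have hD : 0 < x ^ 2 + a ^ 4 - 2 * a ^ 2 * x ^ 2 := by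
    nlinarith [sq_nonneg (x ^ 2 - a ^ 2), mul_pos (mul_pos hx hx) hx2]
  have hhyp := hyp_iff a x y ha₀ ha₁ hx hy hx₁ hy₁ hayx' α β hα hβ
  have hs1iff : Real.sqrt ((1 - x ^ 2) / (1 - a ^ 2)) < y ↔
      1 - x ^ 2 < y ^ 2 * (1 - a ^ 2) := by
    rw [Real.sqrt_lt' hy, div_lt_iff₀ ha2]
  have hr : (0 : ℝ) ≤ (1 - x ^ 2) / (x ^ 2 + a ^ 4 - 2 * a ^ 2 * x ^ 2) :=
    div_nonneg hx2.le hD.le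
  have hs2iff : y ≤ x * Real.sqrt ((1 - x ^ 2) / (x ^ 2 + a ^ 4 - 2 * a ^ 2 * x ^ 2)) ↔
      y ^ 2 * (x ^ 2 + a ^ 4 - 2 * a ^ 2 * x ^ 2) ≤ x ^ 2 * (1 - x ^ 2) := by
    constructor
    · intro h
      have h' : y / x ≤ Real.sqrt ((1 - x ^ 2) / (x ^ 2 + a ^ 4 - 2 * a ^ 2 * x ^ 2)) := by
        rw [div_le_iff₀ hx]
        linarith [mul_comm x (Real.sqrt ((1 - x ^ 2) / (x ^ 2 + a ^ 4 - 2 * a ^ 2 * x ^ 2)))]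
      have h2 := (Real.le_sqrt (by positivity) hr).mp h'
      rw [div_pow, div_le_div_iff₀ (by positivity) hD] at h2
      linarith
    · intro h
      have h2 : (y / x) ^ 2 ≤ (1 - x ^ 2) / (x ^ 2 + a ^ 4 - 2 * a ^ 2 * x ^ 2) := by
        rw [div_pow, div_le_div_iff₀ (by positivity) hD]
        linarith
      have h' := (Real.le_sqrt (by positivity) hr).mpr h2
      rw [div_le_iff₀ hx] at h'
      linarith [mul_comm (Real.sqrt ((1 - x ^ 2) / (x ^ 2 + a ^ 4 - 2 * a ^ 2 * x ^ 2))) x]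
  constructor
  · rintro ⟨hHyp, hNoSub⟩
    have hyp2 := hhyp.mp hHyp
    have hsub : 1 - x ^ 2 < y ^ 2 * (1 - a ^ 2) := by
      by_contra hcon
      push_neg at hcon
      exact hNoSub (exists_measure a x y ha₀ ha₁ hx hy hx₁ hy₁ hayx' hcon)
    refine ⟨?_, hs1iff.mpr hsub, hs2iff.mpr hyp2⟩
    have s1 : x ^ 2 * (1 - x ^ 2) < x ^ 2 * (y ^ 2 * (1 - a ^ 2)) := by
      exact (mul_lt_mul_iff_right₀ (by positivity)).2 hsub
    have s2 : y ^ 2 * (x ^ 2 + a ^ 4 - 2 * a ^ 2 * x ^ 2) < y ^ 2 * (x ^ 2 * (1 - a ^ 2)) := by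
      nlinarith [hyp2, s1]
    have s3 : x ^ 2 + a ^ 4 - 2 * a ^ 2 * x ^ 2 < x ^ 2 * (1 - a ^ 2) := by
      nlinarith [s2, mul_pos hy hy]
    have s4 : a ^ 2 < x ^ 2 := by nlinarith [mul_pos ha₀ ha₀]
    nlinarith [s4, mul_pos ha₀ hx]
  · rintro ⟨hax, hs1, hs2⟩
    refine ⟨hhyp.mpr (hs2iff.mp hs2), no_measure a x y (hs1iff.mp hs1)⟩
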